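/- (Benamou–Brenier verification, Proposition 1.) Let t₀ < t₁, let ρ₀ and ρ₁ be probability densities on ℝⁿ, and let ψ : ℝⁿ × [t₀,t₁] → ℝ be continuously differentiable in t and twice continuously differentiable in x, satisfying the Hamilton–Jacobi equation ∂ψ/∂t + (1/2)‖∇ψ‖² = 0 on ℝⁿ × (t₀,t₁). Let ρ* : ℝⁿ × [t₀,t₁] → ℝ be nonnegative, continuously differentiable, with compact support contained in K × [t₀,t₁] for some compact K ⊆ ℝⁿ, satisfying the continuity equation ∂ρ*/∂t + ∇·(ρ* ∇ψ) = 0 with ρ*(·,t₀) = ρ₀ and ρ*(·,t₁) = ρ₁. Then for every pair (ρ, v) where ρ : ℝⁿ × [t₀,t₁] → ℝ is nonnegative, continuously differentiable, compactly supported in K' × [t₀,t₁] for some compact K' ⊆ ℝⁿ, v : ℝⁿ × [t₀,t₁] → ℝⁿ is continuously differentiable, ∂ρ/∂t + ∇·(v ρ) = 0, ρ(·,t₀) = ρ₀ and ρ(·,t₁) = ρ₁, one has ∫_{t₀}^{t₁} ∫_{ℝⁿ} (1/2)‖v(x,t)‖² ρ(x,t) dx dt ≥ ∫_{t₀}^{t₁}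 ∫_{ℝⁿ} (1/2)‖∇ψ(x,t)‖² ρ*(x,t) dx dt. In particular (ρ*, ∇ψ) solves the Benamou–Brenier fluid-dynamic optimal transport problem from ρ₀ to ρ₁. -/

import Mathlib

open Set MeasureTheory
open scoped RealInnerProductSpace

open Filter
open scoped Topology

/-- The divergence in `x` of a vector field `w : ℝⁿ → ℝⁿ`: `∑ i, ∂wᵢ/∂xᵢ`. -/
noncomputable def diver {n : ℕ} (w : EuclideanSpace ℝ (Fin n) → EuclideanSpace ℝ (Fin n))
    (x : EuclideanSpace ℝ (Fin n)) : ℝ :=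
  ∑ i : Fin n, fderiv ℝ (fun y => w y i) x (EuclideanSpace.single i 1)

/-- Divergence theorem on `ℝᵐ⁺¹ = Fin (m+1) → ℝ` for compactly supported C¹ fields. -/
lemma pi_integral_div_eq_zero {m : ℕ} (W : (Fin (m+1) → ℝ) → (Fin (m+1) → ℝ))
    (hW : ContDiff ℝ 1 W) (K : Set (Fin (m+1) → ℝ)) (hK : IsCompact K)
    (hsupp : ∀ z ∉ K, W z = 0) :
    ∫ z, ∑ i, fderiv ℝ (fun y => W y i) z (Pi.single i 1) = 0 := by
  obtain ⟨R, hR⟩ := hK.isBounded.subset_ball 0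
  set a : Fin (m+1) → ℝ := fun _ => -(|R|+1) with ha
  set b : Fin (m+1) → ℝ := fun _ => |R|+1 with hb
  have hRR : ∀ z ∉ Metric.closedBall (0 : Fin (m+1) → ℝ) |R|, W z = 0 := by
    intro z hz
    refine hsupp z fun hzK => hz ?_
    have := hR hzK
    simp only [Metric.mem_ball, dist_zero_right] at this
    simp only [Metric.mem_closedBall, dist_zero_right]
    exact le_of_lt (lt_of_lt_of_le this (le_abs_self R))
  have hWd : ∀ i : Fin (m+1), Differentiable ℝ (fun y => W y i) := fun i =>
    (ContinuousLinearMap.proj (R := ℝ) (φ := fun _ : Fin (m+1) => ℝ) i).differentiable.comp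
      (hW.differentiable one_ne_zero)
  have hdivcont : Continuous fun z => ∑ i, fderiv ℝ (fun y => W y i) z (Pi.single i 1) := by
    refine continuous_finset_sum _ fun i _ => ?_
    have : ContDiff ℝ 1 (fun y => W y i) :=
      (ContinuousLinearMap.proj (R := ℝ) (φ := fun _ : Fin (m+1) => ℝ) i).contDiff.comp hW
    exact (this.continuous_fderiv one_ne_zero).clm_apply continuous_const
  have hfderiv0 : ∀ z ∉ Metric.closedBall (0 : Fin (m+1) → ℝ) |R|, ∀ i : Fin (m+1),
      fderiv ℝ (fun y => W y i) z = 0 := by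
    intro z hz i
    have hopen : IsOpen (Metric.closedBall (0 : Fin (m+1) → ℝ) |R|)ᶜ :=
      Metric.isClosed_closedBall.isOpen_compl
    have hev : (fun y => W y i) =ᶠ[nhds z] fun _ => (0:ℝ) := by
      filter_upwards [hopen.mem_nhds hz] with y hy
      rw [hRR y hy]; rfl
    rw [hev.fderiv_eq, fderiv_fun_const]; rfl
  -- the divergence vanishes off the closed ball
  have hdiv0 : ∀ z ∉ Metric.closedBall (0 : Fin (m+1) → ℝ) |R|,
      (∑ i, fderiv ℝ (fun y => W y i) z (Pi.single i 1)) = 0 := by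
    intro z hz
    simp [hfderiv0 z hz]
  have hball_sub : Metric.closedBall (0 : Fin (m+1) → ℝ) |R| ⊆ Icc a b := by
    intro z hz
    simp only [Metric.mem_closedBall, dist_zero_right] at hz
    refine ⟨fun i => ?_, fun i => ?_⟩ <;>
    · have h2 := abs_le.mp (le_trans (norm_le_pi_norm z i) hz)
      simp only [ha, hb]
      first
      | linarith [h2.1]
      | linarith [h2.2]
  have hle : a ≤ b := fun i => by simp only [ha, hb]; linarith [abs_nonneg R]
  have key := integral_divergence_of_hasFDerivAt_off_countable' a b hle
    (fun i z => W z i) (fun i z => fderiv ℝ (fun y => W y i) z) ∅ countable_empty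
    (fun i => (hWd i).continuous.continuousOn)
    (fun x _ i => ((hWd i) x).hasFDerivAt)
    (hdivcont.continuousOn.integrableOn_compact isCompact_Icc)
  have hfaces : ∀ (i : Fin (m+1)) (c : ℝ), |c| = |R|+1 →
      ∀ x : Fin m → ℝ, W (Fin.insertNth i c x) i = 0 := by
    intro i c hc x
    have hnot : Fin.insertNth i c x ∉ Metric.closedBall (0 : Fin (m+1) → ℝ) |R| := by
      simp only [Metric.mem_closedBall, dist_zero_right]
      intro hcon
      have h3 := norm_le_pi_norm (Fin.insertNth i c x : Fin (m+1) → ℝ) i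
      rw [Fin.insertNth_apply_same] at h3
      rw [Real.norm_eq_abs, hc] at h3
      have := le_trans h3 hcon
      linarith
    rw [hRR _ hnot]; rfl
  rw [show ∫ z, ∑ i, fderiv ℝ (fun y => W y i) z (Pi.single i 1)
      = ∫ z in Icc a b, ∑ i, fderiv ℝ (fun y => W y i) z (Pi.single i 1) from
    (setIntegral_eq_integral_of_forall_compl_eq_zero fun z hz =>
      hdiv0 z (fun hzb => hz (hball_sub hzb))).symm]
  rw [key]
  refine Finset.sum_eq_zero fun i _ => ?_
  have h1 : ∀ x : Fin m → ℝ, W (Fin.insertNth i (b i) x) i = 0 :=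
    hfaces i (b i) (by simp only [hb]; rw [abs_of_nonneg (by positivity)])
  have h0 : ∀ x : Fin m → ℝ, W (Fin.insertNth i (a i) x) i = 0 :=
    hfaces i (a i) (by simp only [ha]; rw [abs_neg, abs_of_nonneg (by positivity)])
  simp only [h1, h0, integral_zero, sub_self]

/-- A separately continuous function on a product with `ℝ` second factor is jointly measurable. -/
lemma measurable_of_separately_continuous {α : Type*} [MeasurableSpace α] [TopologicalSpace α]
    [OpensMeasurableSpace α] (ψ : α → ℝ → ℝ)
    (h1 : ∀ x, Continuous fun t => ψ x t) (h2 : ∀ t, Continuous fun x => ψ x t) :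
    Measurable fun p : α × ℝ => ψ p.1 p.2 := by
  have happr : ∀ k : ℕ, Measurable fun p : α × ℝ => ψ p.1 ((⌈p.2 * 2^k⌉ : ℤ) / 2^k) := by
    intro k
    have hg : Measurable fun q : α × ℤ => ψ q.1 ((q.2 : ℝ) / 2^k) :=
      measurable_from_prod_countable_left fun z => by
        simpa using (h2 ((z:ℝ)/2^k)).measurable
    exact hg.comp (measurable_fst.prodMk
        ((Int.measurable_ceil.comp ((measurable_id.mul_const ((2:ℝ)^k)))).comp measurable_snd))
  refine measurable_of_tendsto_metrizable happr ?_
  rw [tendsto_pi_nhds]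
  intro p
  have ht : Tendsto (fun k : ℕ => ((⌈p.2 * 2^k⌉ : ℤ) : ℝ) / 2^k) atTop (𝓝 p.2) := by
    have hb : ∀ k : ℕ, ‖((⌈p.2 * 2^k⌉ : ℤ) : ℝ) / 2^k - p.2‖ ≤ ((1:ℝ)/2)^k := by
      intro k
      have h2k : (0:ℝ) < 2^k := by positivity
      have hc1 : p.2 * 2^k ≤ ((⌈p.2 * 2^k⌉ : ℤ) : ℝ) := Int.le_ceil _
      have hc2 : ((⌈p.2 * 2^k⌉ : ℤ) : ℝ) < p.2 * 2^k + 1 := Int.ceil_lt_add_one _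
      have hlow : p.2 ≤ ((⌈p.2 * 2^k⌉ : ℤ) : ℝ) / 2^k := by
        rw [le_div_iff₀ h2k]; linarith
      have hhigh : ((⌈p.2 * 2^k⌉ : ℤ) : ℝ) / 2^k ≤ p.2 + 1/2^k := by
        rw [div_le_iff₀ h2k]
        have : (p.2 + 1/2^k) * 2^k = p.2 * 2^k + 1 := by field_simp
        rw [this]; linarith
      have hpow : ((1:ℝ)/2)^k = 1/2^k := by rw [div_pow]; norm_num
      rw [Real.norm_eq_abs, abs_le, hpow]
      have hp : (0:ℝ) < 1/2^k := by positivity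
      exact ⟨by linarith, by linarith⟩
    have h0 : Tendsto (fun k : ℕ => ((1:ℝ)/2)^k) atTop (𝓝 0) :=
      tendsto_pow_atTop_nhds_zero_of_lt_one (by norm_num) (by norm_num)
    have := squeeze_zero_norm hb h0
    have := this.add_const p.2
    simpa using this
  exact ((h1 p.1).tendsto p.2).comp ht

/-- Joint measurability of the time partial derivative. -/
lemma measurable_deriv_slice {α : Type*} [MeasurableSpace α] (ψ : α → ℝ → ℝ)
    (hmeas : Measurable fun p : α × ℝ => ψ p.1 p.2)
    (hdiff : ∀ x, Differentiable ℝ (ψ x)) :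
    Measurable fun p : α × ℝ => deriv (fun s => ψ p.1 s) p.2 := by
  have happr : ∀ k : ℕ, Measurable fun p : α × ℝ =>
      (ψ p.1 (p.2 + 1/(k+1)) - ψ p.1 p.2) * (k+1) := by
    intro k
    exact ((hmeas.comp (measurable_fst.prodMk (measurable_snd.add_const _))).sub
      hmeas).mul_const _
  refine measurable_of_tendsto_metrizable happr ?_
  rw [tendsto_pi_nhds]
  intro p
  have hd : HasDerivAt (fun s => ψ p.1 s) (deriv (fun s => ψ p.1 s) p.2) p.2 :=
    ((hdiff p.1) p.2).hasDerivAt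
  rw [hasDerivAt_iff_tendsto_slope] at hd
  have hu : Tendsto (fun k : ℕ => p.2 + 1/(k+1)) atTop (𝓝[≠] p.2) := by
    rw [tendsto_nhdsWithin_iff]
    constructor
    · have : Tendsto (fun k : ℕ => (1:ℝ)/(k+1)) atTop (𝓝 0) := by
        exact tendsto_one_div_add_atTop_nhds_zero_nat
      simpa using (tendsto_const_nhds.add this)
    · refine Eventually.of_forall fun k => ?_
      simp only [mem_compl_iff, mem_singleton_iff]
      have : (0:ℝ) < 1/(k+1) := by positivity
      intro h
      nlinarith [h]
  have := hd.comp hu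
  refine this.congr fun k => ?_
  have hne : (1:ℝ)/(k+1) ≠ 0 := by positivity
  simp only [Function.comp_apply, slope_def_field]
  rw [div_eq_iff (by linarith [show (0:ℝ) < 1/(k+1) by positivity] : p.2 + 1/(k+1) - p.2 ≠ 0)]
  ring_nf
  field_simp
  ring

section Helpers
variable {n : ℕ}
local notation "E" => EuclideanSpace ℝ (Fin n)

lemma inner_gradient (f : E → ℝ) (x u : E) :
    ⟪gradient f x, u⟫ = fderiv ℝ f x u := by
  simp [gradient, InnerProductSpace.toDual_symm_apply]

lemma gradient_apply (f : E → ℝ) (x : E) (i : Fin n) :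
    gradient f x i = fderiv ℝ f x (EuclideanSpace.single i 1) := by
  rw [← inner_gradient, EuclideanSpace.inner_single_right]
  simp

lemma inner_gradient' (f : E → ℝ) (x u : E) :
    ⟪gradient f x, u⟫ = ∑ i, fderiv ℝ f x (EuclideanSpace.single i 1) * u i := by
  rw [PiLp.inner_apply]
  congr 1; ext i
  rw [← gradient_apply]
  simp
  ring

lemma diver_smul (f : E → ℝ) (u : E → E) (x : E) (hf : DifferentiableAt ℝ f x)
    (hu : ∀ i, DifferentiableAt ℝ (fun y => u y i) x) :
    diver (fun y => f y • u y) x = ⟪gradient f x, u x⟫ + f x * diver u x := by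
  unfold diver
  have h : ∀ i : Fin n, fderiv ℝ (fun y => (f y • u y) i) x (EuclideanSpace.single i 1)
      = u x i * fderiv ℝ f x (EuclideanSpace.single i 1)
        + f x * fderiv ℝ (fun y => u y i) x (EuclideanSpace.single i 1) := by
    intro i
    have : (fun y => (f y • u y) i) = fun y => f y * u y i := by
      ext y; simp [PiLp.smul_apply]
    rw [this, fderiv_fun_mul hf (hu i)]
    simp [smul_eq_mul]
    ring
  simp only [h, Finset.sum_add_distrib, ← Finset.mul_sum]
  rw [inner_gradient']
  congr 1
  exact Finset.sum_congr rfl fun i _ => by ring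

lemma integral_diver_eq_zero {n : ℕ} (w : EuclideanSpace ℝ (Fin n) → EuclideanSpace ℝ (Fin n))
    (hw : ContDiff ℝ 1 w) (K : Set (EuclideanSpace ℝ (Fin n))) (hK : IsCompact K)
    (hsupp : ∀ x ∉ K, w x = 0) : ∫ x, diver w x = 0 := by
  rcases n with _ | m
  · simp [diver]
  set φ := PiLp.continuousLinearEquiv 2 ℝ (fun _ : Fin (m+1) => ℝ) with hφ
  set W : (Fin (m+1) → ℝ) → (Fin (m+1) → ℝ) := fun z => φ (w (φ.symm z)) with hWdef
  have hWc : ContDiff ℝ 1 W := (φ.contDiff.comp hw).comp φ.symm.contDiff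
  have hcoord : ∀ i : Fin (m+1), (fun y : EuclideanSpace ℝ (Fin (m+1)) => w y i)
      = (fun z => W z i) ∘ ⇑φ := by
    intro i; ext y
    rfl
  have hpoint : ∀ x, diver w x = ∑ i, fderiv ℝ (fun y => W y i) (φ x) (Pi.single i 1) := by
    intro x
    unfold diver
    refine Finset.sum_congr rfl fun i _ => ?_
    rw [hcoord i, φ.comp_right_fderiv]
    simp only [ContinuousLinearMap.coe_comp', Function.comp_apply,
      ContinuousLinearEquiv.coe_coe]
    congr 1
  have him : ∀ z ∉ φ '' K, W z = 0 := by
    intro z hz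
    have : φ.symm z ∉ K := fun hmem => hz ⟨φ.symm z, hmem, by simp⟩
    simp [hWdef, hsupp _ this]
  have hmp : MeasurePreserving (⇑φ)
      (volume : Measure (EuclideanSpace ℝ (Fin (m+1)))) volume := by
    have := EuclideanSpace.volume_preserving_symm_measurableEquiv_toLp (Fin (m+1))
    convert this using 1 <;> rfl
  have hemb : MeasurableEmbedding (⇑φ) := φ.toHomeomorph.measurableEmbedding
  have h1 : ∫ x, diver w x
      = ∫ x, (fun z => ∑ i, fderiv ℝ (fun y => W y i) z (Pi.single i 1)) (φ x) := by
    simp only [hpoint]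
  rw [h1]
  exact (hmp.integral_comp hemb
      (fun z => ∑ i, fderiv ℝ (fun y => W y i) z (Pi.single i 1))).trans
    (pi_integral_div_eq_zero W hWc (φ '' K) (hK.image φ.continuous) him)

lemma diver_continuous (w : E → E) (hw : ContDiff ℝ 1 w) : Continuous (diver w) := by
  refine continuous_finset_sum _ fun i _ => ?_
  have : ContDiff ℝ 1 (fun y => w y i) :=
    (EuclideanSpace.proj (𝕜 := ℝ) (ι := Fin n) i).contDiff.comp hw
  exact (this.continuous_fderiv one_ne_zero).clm_apply continuous_const

lemma diver_eq_zero_off (w : E → E) (K : Set (EuclideanSpace ℝ (Fin n))) (hKc : IsClosed K)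
    (h : ∀ x ∉ K, w x = 0) : ∀ x ∉ K, diver w x = 0 := by
  intro x hx
  unfold diver
  refine Finset.sum_eq_zero fun i _ => ?_
  have hev : (fun y => w y i) =ᶠ[𝓝 x] fun _ => (0:ℝ) := by
    filter_upwards [hKc.isOpen_compl.mem_nhds hx] with y hy
    rw [h y hy]; rfl
  rw [hev.fderiv_eq, fderiv_fun_const]; rfl

lemma integrable_of_compact_support (f : E → ℝ) (hf : Continuous f)
    (K : Set (EuclideanSpace ℝ (Fin n))) (hK : IsCompact K) (h0 : ∀ x ∉ K, f x = 0) :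
    Integrable f := by
  refine hf.integrable_of_hasCompactSupport ?_
  refine HasCompactSupport.intro hK h0

/-- coordinate slice of a `C¹` field is `C¹`. -/
lemma coord_contdiff (w : E → E) (hw : ContDiff ℝ 1 w) (i : Fin n) :
    ContDiff ℝ 1 (fun y => w y i) :=
  (EuclideanSpace.proj (𝕜 := ℝ) (ι := Fin n) i).contDiff.comp hw

/-- time-derivative of a slice of a jointly `C¹` function, as an evaluation of the joint
fderiv; in particular it is jointly continuous. -/
lemma deriv_slice_eq (F : (E × ℝ) → ℝ) (hF : ContDiff ℝ 1 F) (x : E) (t : ℝ) :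
    deriv (fun s => F (x, s)) t = fderiv ℝ F (x, t) (0, 1) := by
  have h1 : HasDerivAt (fun s : ℝ => ((x, s) : E × ℝ)) (0, 1) t := by
    have := ((hasDerivAt_id t).const_mul (1:ℝ))
    exact (hasDerivAt_const t x).prodMk (hasDerivAt_id t)
  have h2 : HasFDerivAt F (fderiv ℝ F (x, t)) (x, t) :=
    (hF.differentiable one_ne_zero _).hasFDerivAt
  exact (h2.comp_hasDerivAt t h1).deriv

lemma deriv_slice_continuous (F : (E × ℝ) → ℝ) (hF : ContDiff ℝ 1 F) :
    Continuous (fun p : E × ℝ => deriv (fun s => F (p.1, s)) p.2) := by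
  have : (fun p : E × ℝ => deriv (fun s => F (p.1, s)) p.2)
      = fun p => fderiv ℝ F p (0, 1) := by
    ext p; rw [← deriv_slice_eq F hF p.1 p.2]
  rw [this]
  exact (hF.continuous_fderiv one_ne_zero).clm_apply continuous_const

end Helpers

/-- Main auxiliary computation. -/
lemma key_aux (t₀ t₁ : ℝ) (h01 : t₀ < t₁)
    (ψ : EuclideanSpace ℝ (Fin n) → ℝ → ℝ)
    (hψt : ∀ x, ContDiff ℝ 1 fun t => ψ x t)
    (hψx : ∀ t : ℝ, ContDiff ℝ 2 fun x => ψ x t)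
    (hHJ : ∀ x, ∀ t ∈ Set.Ioo t₀ t₁,
      deriv (fun s => ψ x s) t + (1 / 2) * ‖gradient (fun y => ψ y t) x‖ ^ 2 = 0)
    (ρ : EuclideanSpace ℝ (Fin n) → ℝ → ℝ)
    (v : EuclideanSpace ℝ (Fin n) → ℝ → EuclideanSpace ℝ (Fin n))
    (hρC1 : ContDiff ℝ 1 fun p : EuclideanSpace ℝ (Fin n) × ℝ => ρ p.1 p.2)
    (K : Set (EuclideanSpace ℝ (Fin n))) (hK : IsCompact K)
    (hsupp : ∀ t ∈ Set.Icc t₀ t₁, ∀ x ∉ K, ρ x t = 0)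
    (hv : ∀ t ∈ Set.Ioo t₀ t₁, ContDiff ℝ 1 fun x => v x t)
    (hcont : ∀ x, ∀ t ∈ Set.Ioo t₀ t₁,
      deriv (fun s => ρ x s) t + diver (fun y => ρ y t • v y t) x = 0) :
    (∫ t in Ioo t₀ t₁, ∫ x, (deriv (fun s => ψ x s) t
        + ⟪gradient (fun y => ψ y t) x, v x t⟫) * ρ x t)
      = (∫ x, (ψ x t₁ * ρ x t₁ - ψ x t₀ * ρ x t₀))
    ∧ IntegrableOn (fun t => ∫ x, (deriv (fun s => ψ x s) t
        + ⟪gradient (fun y => ψ y t) x, v x t⟫) * ρ x t) (Ioo t₀ t₁)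
    ∧ ∀ t ∈ Ioo t₀ t₁, Integrable (fun x => (deriv (fun s => ψ x s) t
        + ⟪gradient (fun y => ψ y t) x, v x t⟫) * ρ x t) := by
  -- abbreviations
  set g : EuclideanSpace ℝ (Fin n) → ℝ → EuclideanSpace ℝ (Fin n) :=
    fun x t => gradient (fun y => ψ y t) x with hgdef
  set A : EuclideanSpace ℝ (Fin n) → ℝ → ℝ :=
    fun x t => deriv (fun s => ψ x s * ρ x s) t with hAdef
  -- slice regularity
  have hψx1 : ∀ t : ℝ, ContDiff ℝ 1 fun x => ψ x t := fun t => (hψx t).of_le one_le_two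
  have hρx1 : ∀ t : ℝ, ContDiff ℝ 1 fun x => ρ x t := fun t =>
    hρC1.comp (contDiff_id.prodMk contDiff_const)
  have hρt1 : ∀ x, ContDiff ℝ 1 fun s => ρ x s := fun x =>
    hρC1.comp (contDiff_const.prodMk contDiff_id)
  have hg1 : ∀ t : ℝ, ContDiff ℝ 1 fun x => g x t := by
    intro t
    have h1 : ContDiff ℝ 1 (fderiv ℝ (fun x => ψ x t)) :=
      (hψx t).fderiv_right (by norm_num)
    have : (fun x => g x t)
        = fun x => (InnerProductSpace.toDual ℝ (EuclideanSpace ℝ (Fin n))).symm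
            (fderiv ℝ (fun y => ψ y t) x) := rfl
    rw [this]
    exact (InnerProductSpace.toDual ℝ
      (EuclideanSpace ℝ (Fin n))).symm.toLinearIsometry.contDiff.comp h1
  have hmul : ∀ x, ContDiff ℝ 1 fun s => ψ x s * ρ x s := fun x => (hψt x).mul (hρt1 x)
  -- the pointwise divergence identity
  have hpoint : ∀ t ∈ Ioo t₀ t₁, ∀ x,
      A x t + diver (fun y => (ψ y t * ρ y t) • v y t) x
        = (deriv (fun s => ψ x s) t + ⟪g x t, v x t⟫) * ρ x t := by
    intro t ht x
    have hA : A x t = deriv (fun s => ψ x s) t * ρ x t + ψ x t * deriv (fun s => ρ x s) t :=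
      deriv_fun_mul (((hψt x).differentiable one_ne_zero).differentiableAt)
        (((hρt1 x).differentiable one_ne_zero).differentiableAt)
    have hfield : (fun y => (ψ y t * ρ y t) • v y t)
        = fun y => ψ y t • (ρ y t • v y t) := by
      funext y; rw [smul_smul]
    have hucoord : ∀ i, DifferentiableAt ℝ (fun y => (ρ y t • v y t) i) x := by
      intro i
      have : (fun y => (ρ y t • v y t) i) = fun y => ρ y t * v y t i := rfl
      rw [this]
      exact (((hρx1 t).differentiable one_ne_zero).differentiableAt).mul
        (((coord_contdiff _ (hv t ht) i).differentiable one_ne_zero).differentiableAt)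
    have hD : diver (fun y => (ψ y t * ρ y t) • v y t) x
        = ⟪g x t, ρ x t • v x t⟫ + ψ x t * diver (fun y => ρ y t • v y t) x := by
      rw [hfield]
      exact diver_smul (fun y => ψ y t) (fun y => ρ y t • v y t) x
        (((hψx1 t).differentiable one_ne_zero).differentiableAt) hucoord
    have hinner : ⟪g x t, ρ x t • v x t⟫ = ρ x t * ⟪g x t, v x t⟫ :=
      real_inner_smul_right _ _ _
    have hc := hcont x t ht
    rw [hA, hD, hinner]
    linear_combination ψ x t * hc
  -- per-`t` regularity / support / integrability facts
  have hslice : ∀ t ∈ Ioo t₀ t₁,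
      ContDiff ℝ 1 (fun y => (ψ y t * ρ y t) • v y t) := fun t ht =>
    ((hψx1 t).mul (hρx1 t)).smul (hv t ht)
  have hfieldsupp : ∀ t ∈ Icc t₀ t₁, ∀ x ∉ K, (ψ x t * ρ x t) • v x t = 0 := by
    intro t ht x hx; rw [hsupp t ht x hx]; simp
  have hdψcont : ∀ t ∈ Ioo t₀ t₁, Continuous fun x => deriv (fun s => ψ x s) t := by
    intro t ht
    have hh : (fun x => deriv (fun s => ψ x s) t) = fun x => -((1/2) * ‖g x t‖^2) := by
      funext x; have := hHJ x t ht; linarith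
    rw [hh]
    exact (continuous_const.mul ((hg1 t).continuous.norm.pow 2)).neg
  have hADcont : ∀ t ∈ Ioo t₀ t₁, Continuous fun x =>
      (deriv (fun s => ψ x s) t + ⟪g x t, v x t⟫) * ρ x t := fun t ht =>
    ((hdψcont t ht).add ((hg1 t).continuous.inner (hv t ht).continuous)).mul
      (hρx1 t).continuous
  have hADsupp : ∀ t ∈ Icc t₀ t₁, ∀ x ∉ K,
      (deriv (fun s => ψ x s) t + ⟪g x t, v x t⟫) * ρ x t = 0 := by
    intro t ht x hx; rw [hsupp t ht x hx, mul_zero]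
  have hADint : ∀ t ∈ Ioo t₀ t₁, Integrable (fun x =>
      (deriv (fun s => ψ x s) t + ⟪g x t, v x t⟫) * ρ x t) := fun t ht =>
    integrable_of_compact_support _ (hADcont t ht) K hK
      (hADsupp t (Ioo_subset_Icc_self ht) ·)
  have hDcont : ∀ t ∈ Ioo t₀ t₁,
      Continuous fun x => diver (fun y => (ψ y t * ρ y t) • v y t) x :=
    fun t ht => diver_continuous _ (hslice t ht)
  have hDsupp : ∀ t ∈ Ioo t₀ t₁, ∀ x ∉ K,
      diver (fun y => (ψ y t * ρ y t) • v y t) x = 0 :=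
    fun t ht => diver_eq_zero_off _ K hK.isClosed (hfieldsupp t (Ioo_subset_Icc_self ht))
  have hDint : ∀ t ∈ Ioo t₀ t₁,
      Integrable (fun x => diver (fun y => (ψ y t * ρ y t) • v y t) x) :=
    fun t ht => integrable_of_compact_support _ (hDcont t ht) K hK (hDsupp t ht)
  have hDzero : ∀ t ∈ Ioo t₀ t₁, ∫ x, diver (fun y => (ψ y t * ρ y t) • v y t) x = 0 :=
    fun t ht => integral_diver_eq_zero _ (hslice t ht) K hK
      (hfieldsupp t (Ioo_subset_Icc_self ht))
  have hAfun : ∀ t ∈ Ioo t₀ t₁, (fun x => A x t) = fun x =>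
      ((deriv (fun s => ψ x s) t + ⟪g x t, v x t⟫) * ρ x t
        - diver (fun y => (ψ y t * ρ y t) • v y t) x) := by
    intro t ht
    funext x; have := hpoint t ht x; linarith
  have hAint : ∀ t ∈ Ioo t₀ t₁, Integrable (fun x => A x t) := by
    intro t ht
    rw [hAfun t ht]; exact (hADint t ht).sub (hDint t ht)
  have hAeq : ∀ t ∈ Ioo t₀ t₁, ∫ x, A x t
      = ∫ x, (deriv (fun s => ψ x s) t + ⟪g x t, v x t⟫) * ρ x t := by
    intro t ht
    rw [hAfun t ht, integral_sub (hADint t ht) (hDint t ht), hDzero t ht, sub_zero]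
  -- monotonicity of `ψ` in time, and bounds
  have hderiv_nonpos : ∀ x, ∀ t ∈ Ioo t₀ t₁, deriv (fun s => ψ x s) t ≤ 0 := by
    intro x t ht
    have := hHJ x t ht
    nlinarith [sq_nonneg ‖g x t‖]
  have hanti : ∀ x, AntitoneOn (fun s => ψ x s) (Icc t₀ t₁) := by
    intro x
    refine antitoneOn_of_deriv_nonpos (convex_Icc _ _) (hψt x).continuous.continuousOn
      (fun s _ => (((hψt x).differentiable one_ne_zero) s).differentiableWithinAt) ?_
    intro s hs
    rw [interior_Icc] at hs
    exact hderiv_nonpos x s hs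
  obtain ⟨C₀, hC₀⟩ := hK.exists_bound_of_continuousOn (hψx1 t₀).continuous.continuousOn
  obtain ⟨C₁, hC₁⟩ := hK.exists_bound_of_continuousOn (hψx1 t₁).continuous.continuousOn
  set Cψ := max C₀ C₁ with hCψdef
  have hψbound : ∀ x ∈ K, ∀ t ∈ Icc t₀ t₁, |ψ x t| ≤ Cψ := by
    intro x hx t ht
    have h1 : ψ x t ≤ ψ x t₀ := hanti x (left_mem_Icc.mpr h01.le) ht ht.1
    have h2 : ψ x t₁ ≤ ψ x t := hanti x ht (right_mem_Icc.mpr h01.le) ht.2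
    have b0 := hC₀ x hx; have b1 := hC₁ x hx
    rw [Real.norm_eq_abs, abs_le] at b0 b1
    rw [abs_le]
    constructor
    · have : -Cψ ≤ -C₁ := neg_le_neg (le_max_right _ _)
      linarith [b1.1]
    · have : C₀ ≤ Cψ := le_max_left _ _
      linarith [b0.2]
  obtain ⟨Mρ, hMρ⟩ := (hK.prod (isCompact_Icc (a := t₀) (b := t₁))).exists_bound_of_continuousOn
    hρC1.continuous.continuousOn
  have hdρcont : Continuous fun p : EuclideanSpace ℝ (Fin n) × ℝ =>
      deriv (fun s => ρ p.1 s) p.2 :=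
    deriv_slice_continuous (fun p => ρ p.1 p.2) hρC1
  obtain ⟨Md, hMd⟩ := (hK.prod (isCompact_Icc (a := t₀) (b := t₁))).exists_bound_of_continuousOn
    hdρcont.continuousOn
  -- FTC in time
  have hFTCmul : ∀ x, ∫ t in Ioo t₀ t₁, A x t = ψ x t₁ * ρ x t₁ - ψ x t₀ * ρ x t₀ := by
    intro x
    have hd := intervalIntegral.integral_deriv_eq_sub
      (f := fun s => ψ x s * ρ x s) (a := t₀) (b := t₁)
      (fun s _ => ((hmul x).differentiable one_ne_zero).differentiableAt)
      (((hmul x).continuous_deriv le_rfl).intervalIntegrable _ _)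
    rw [intervalIntegral.integral_of_le h01.le, integral_Ioc_eq_integral_Ioo] at hd
    exact hd
  have hFTCψ : ∀ x, ∫ t in Ioo t₀ t₁, deriv (fun s => ψ x s) t = ψ x t₁ - ψ x t₀ := by
    intro x
    have hd := intervalIntegral.integral_deriv_eq_sub
      (f := fun s => ψ x s) (a := t₀) (b := t₁)
      (fun s _ => (((hψt x).differentiable one_ne_zero) s))
      (((hψt x).continuous_deriv le_rfl).intervalIntegrable _ _)
    rw [intervalIntegral.integral_of_le h01.le, integral_Ioc_eq_integral_Ioo] at hd
    exact hd
  -- joint measurability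
  have hψmeas : Measurable fun p : EuclideanSpace ℝ (Fin n) × ℝ => ψ p.1 p.2 :=
    measurable_of_separately_continuous ψ (fun x => (hψt x).continuous)
      (fun t => (hψx1 t).continuous)
  have hdψmeas : Measurable fun p : EuclideanSpace ℝ (Fin n) × ℝ =>
      deriv (fun s => ψ p.1 s) p.2 :=
    measurable_deriv_slice ψ hψmeas (fun x => (hψt x).differentiable one_ne_zero)
  have hAexp : (fun p : EuclideanSpace ℝ (Fin n) × ℝ => A p.1 p.2) = fun p =>
      deriv (fun s => ψ p.1 s) p.2 * ρ p.1 p.2 + ψ p.1 p.2 * deriv (fun s => ρ p.1 s) p.2 := by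
    funext p
    exact deriv_fun_mul (((hψt p.1).differentiable one_ne_zero).differentiableAt)
      (((hρt1 p.1).differentiable one_ne_zero).differentiableAt)
  have hAmeas : Measurable fun p : EuclideanSpace ℝ (Fin n) × ℝ => A p.1 p.2 := by
    rw [hAexp]
    exact (hdψmeas.mul hρC1.continuous.measurable).add (hψmeas.mul hdρcont.measurable)
  -- `A` vanishes off `K`
  have hAzero : ∀ x ∉ K, ∀ t ∈ Ioo t₀ t₁, A x t = 0 := by
    intro x hx t ht
    have hev : (fun s => ψ x s * ρ x s) =ᶠ[𝓝 t] fun _ => (0:ℝ) := by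
      filter_upwards [Ioo_mem_nhds ht.1 ht.2] with s hs
      rw [hsupp s (Ioo_subset_Icc_self hs) x hx, mul_zero]
    show deriv (fun s => ψ x s * ρ x s) t = 0
    rw [hev.deriv_eq]; exact deriv_const t 0
  -- time-slice integrability of `A`
  have hAcont_t : ∀ x, Continuous fun t => A x t := fun x => (hmul x).continuous_deriv le_rfl
  have hAi_t : ∀ x, Integrable (fun t => A x t) (volume.restrict (Ioo t₀ t₁)) := by
    intro x
    have h2 := (hAcont_t x).intervalIntegrable (μ := volume) t₀ t₁
    rw [intervalIntegrable_iff_integrableOn_Ioo_of_le h01.le] at h2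
    exact h2
  set ν := (volume.restrict (Ioo t₀ t₁) : Measure ℝ) with hν
  have hcontInt : ∀ f : ℝ → ℝ, Continuous f → Integrable f ν := by
    intro f hf
    have h2 := hf.intervalIntegrable (μ := volume) t₀ t₁
    rw [intervalIntegrable_iff_integrableOn_Ioo_of_le h01.le] at h2
    exact h2
  have hmeas' : AEStronglyMeasurable (fun p : EuclideanSpace ℝ (Fin n) × ℝ => A p.1 p.2)
      ((volume : Measure (EuclideanSpace ℝ (Fin n))).prod ν) := hAmeas.aestronglyMeasurable
  have hMρ0 : ∀ x ∈ K, 0 ≤ Mρ := fun x hx => le_trans (norm_nonneg (ρ x t₀))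
    (hMρ (x, t₀) (mk_mem_prod hx (left_mem_Icc.mpr h01.le)))
  have hMd0 : ∀ x ∈ K, 0 ≤ Md := fun x hx => le_trans (norm_nonneg _)
    (hMd (x, t₀) (mk_mem_prod hx (left_mem_Icc.mpr h01.le)))
  have hCψ0 : ∀ x ∈ K, 0 ≤ Cψ := fun x hx => le_trans (abs_nonneg (ψ x t₀))
    (hψbound x hx t₀ (left_mem_Icc.mpr h01.le))
  set Cbig := Mρ * (2*Cψ) + Cψ * Md * (t₁ - t₀) with hCbig
  have hbound : ∀ x, ‖∫ t, ‖A x t‖ ∂ν‖ ≤ K.indicator (fun _ => Cbig) x := by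
    intro x
    by_cases hx : x ∈ K
    · rw [indicator_of_mem hx]
      have h0 : 0 ≤ ∫ t, ‖A x t‖ ∂ν := integral_nonneg fun t => norm_nonneg _
      rw [Real.norm_eq_abs, abs_of_nonneg h0]
      have hptbd : ∀ t ∈ Ioo t₀ t₁,
          ‖A x t‖ ≤ Mρ * (-(deriv (fun s => ψ x s) t)) + Cψ * Md := by
        intro t ht
        have hts : t ∈ Icc t₀ t₁ := Ioo_subset_Icc_self ht
        have e1 : |ρ x t| ≤ Mρ := by
          have := hMρ (x,t) (mk_mem_prod hx hts); rwa [Real.norm_eq_abs] at this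
        have e2 : |deriv (fun s => ρ x s) t| ≤ Md := by
          have := hMd (x,t) (mk_mem_prod hx hts); rwa [Real.norm_eq_abs] at this
        have e3 : |ψ x t| ≤ Cψ := hψbound x hx t hts
        have e4 : deriv (fun s => ψ x s) t ≤ 0 := hderiv_nonpos x t ht
        have hAx := congrFun hAexp (x, t)
        simp only [] at hAx
        rw [Real.norm_eq_abs, hAx]
        have q0 := abs_add_le (deriv (fun s => ψ x s) t * ρ x t)
          (ψ x t * deriv (fun s => ρ x s) t)
        rw [abs_mul, abs_mul] at q0
        have q1 : |deriv (fun s => ψ x s) t| * |ρ x t|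
            ≤ |deriv (fun s => ψ x s) t| * Mρ :=
          mul_le_mul_of_nonneg_left e1 (abs_nonneg _)
        have q2 : |ψ x t| * |deriv (fun s => ρ x s) t| ≤ Cψ * Md :=
          mul_le_mul e3 e2 (abs_nonneg _) (le_trans (abs_nonneg _) e3)
        rw [abs_of_nonpos e4] at q1 q0
        nlinarith [q0, q1, q2]
      have hIb : Integrable (fun t => Mρ * (-(deriv (fun s => ψ x s) t)) + Cψ * Md) ν :=
        hcontInt _ ((continuous_const.mul
          ((hψt x).continuous_deriv le_rfl).neg).add continuous_const)
      have hIψ : Integrable (fun t => -(deriv (fun s => ψ x s) t)) ν :=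
        hcontInt _ ((hψt x).continuous_deriv le_rfl).neg
      have hcomp : ∫ t, ‖A x t‖ ∂ν
          ≤ ∫ t, (Mρ * (-(deriv (fun s => ψ x s) t)) + Cψ * Md) ∂ν := by
        refine integral_mono_ae (hAi_t x).norm hIb ?_
        filter_upwards [ae_restrict_mem measurableSet_Ioo] with t ht using hptbd t ht
      have hval : ∫ t, (Mρ * (-(deriv (fun s => ψ x s) t)) + Cψ * Md) ∂ν
          = Mρ * (ψ x t₀ - ψ x t₁) + Cψ * Md * (t₁ - t₀) := by
        rw [integral_add (hIψ.const_mul Mρ) (integrable_const _), integral_const_mul,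
          integral_neg]
        have hFT := hFTCψ x
        rw [hν] at *
        rw [hFT]
        rw [integral_const]
        simp only [MeasurableSet.univ, Measure.restrict_apply, univ_inter, Real.volume_Ioo,
          smul_eq_mul]
        rw [measureReal_restrict_apply_univ, Real.volume_real_Ioo_of_le h01.le]
        ring
      have hend : Mρ * (ψ x t₀ - ψ x t₁) ≤ Mρ * (2*Cψ) := by
        have e0 := abs_le.mp (hψbound x hx t₀ (left_mem_Icc.mpr h01.le))
        have e1' := abs_le.mp (hψbound x hx t₁ (right_mem_Icc.mpr h01.le))
        have := hMρ0 x hx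
        nlinarith
      rw [hCbig]
      linarith [hcomp, hval ▸ hcomp]
    · rw [indicator_of_notMem hx]
      have hz : ∫ t, ‖A x t‖ ∂ν = 0 := by
        have hzz : (fun t => ‖A x t‖) =ᵐ[ν] fun _ => (0:ℝ) := by
          filter_upwards [ae_restrict_mem measurableSet_Ioo] with t ht
          rw [hAzero x hx t ht, norm_zero]
        rw [integral_congr_ae hzz, integral_zero]
      rw [hz]; simp
  have hgint : Integrable (K.indicator fun _ : EuclideanSpace ℝ (Fin n) => Cbig) :=
    (integrable_indicator_iff hK.measurableSet).mpr
      (integrableOn_const hK.measure_lt_top.ne)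
  have hprod : Integrable (fun p : EuclideanSpace ℝ (Fin n) × ℝ => A p.1 p.2)
      ((volume : Measure (EuclideanSpace ℝ (Fin n))).prod ν) := by
    rw [integrable_prod_iff hmeas']
    exact ⟨Eventually.of_forall hAi_t,
      hgint.mono' hmeas'.norm.integral_prod_right' (Eventually.of_forall hbound)⟩
  have hswap := integral_integral_swap (f := fun x t => A x t) hprod
  have hmarg : Integrable (fun t => ∫ x, A x t) ν := hprod.integral_prod_right
  refine ⟨?_, ?_, fun t ht => hADint t ht⟩
  · have h1 : (∫ t in Ioo t₀ t₁, ∫ x, (deriv (fun s => ψ x s) t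
        + ⟪g x t, v x t⟫) * ρ x t) = ∫ t in Ioo t₀ t₁, ∫ x, A x t :=
      setIntegral_congr_fun measurableSet_Ioo fun t ht => (hAeq t ht).symm
    rw [h1, ← hswap]
    have h2 : (fun x => ∫ t, A x t ∂ν)
        = fun x => ψ x t₁ * ρ x t₁ - ψ x t₀ * ρ x t₀ := funext fun x => hFTCmul x
    rw [h2]
  · refine hmarg.congr ?_
    filter_upwards [ae_restrict_mem measurableSet_Ioo] with t ht
    exact hAeq t ht

/-- **Benamou–Brenier verification, Proposition 1.**
If `ψ` solves the Hamilton–Jacobi equation `∂ψ/∂t + (1/2)‖∇ψ‖² = 0` and `ρ*` solves the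
continuity equation with velocity `∇ψ` interpolating the probability densities `ρ₀, ρ₁`,
then the pair `(ρ*, ∇ψ)` minimizes the kinetic action among all pairs `(ρ, v)` solving the
continuity equation with the same endpoint densities. -/
theorem benamou_brenier_verification {n : ℕ} (t₀ t₁ : ℝ) (h01 : t₀ < t₁)
    (ρ₀ ρ₁ : EuclideanSpace ℝ (Fin n) → ℝ)
    (hρ₀pos : ∀ x, 0 ≤ ρ₀ x) (hρ₁pos : ∀ x, 0 ≤ ρ₁ x)
    (hρ₀int : ∫ x, ρ₀ x = 1) (hρ₁int : ∫ x, ρ₁ x = 1)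
    (ψ : EuclideanSpace ℝ (Fin n) → ℝ → ℝ)
    (hψt : ∀ x, ContDiff ℝ 1 fun t => ψ x t)
    (hψx : ∀ t : ℝ, ContDiff ℝ 2 fun x => ψ x t)
    (hHJ : ∀ x, ∀ t ∈ Set.Ioo t₀ t₁,
      deriv (fun s => ψ x s) t + (1 / 2) * ‖gradient (fun y => ψ y t) x‖ ^ 2 = 0)
    (ρs : EuclideanSpace ℝ (Fin n) → ℝ → ℝ)
    (hρspos : ∀ x t, 0 ≤ ρs x t)
    (hρsC1 : ContDiff ℝ 1 fun p : EuclideanSpace ℝ (Fin n) × ℝ => ρs p.1 p.2)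
    (K : Set (EuclideanSpace ℝ (Fin n))) (hK : IsCompact K)
    (hρssupp : ∀ t ∈ Set.Icc t₀ t₁, ∀ x ∉ K, ρs x t = 0)
    (hρscont : ∀ x, ∀ t ∈ Set.Ioo t₀ t₁,
      deriv (fun s => ρs x s) t
        + diver (fun y => ρs y t • gradient (fun z => ψ z t) y) x = 0)
    (hρs0 : ∀ x, ρs x t₀ = ρ₀ x) (hρs1 : ∀ x, ρs x t₁ = ρ₁ x)
    (ρ : EuclideanSpace ℝ (Fin n) → ℝ → ℝ)
    (v : EuclideanSpace ℝ (Fin n) → ℝ → EuclideanSpace ℝ (Fin n))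
    (hρpos : ∀ x t, 0 ≤ ρ x t)
    (hρC1 : ContDiff ℝ 1 fun p : EuclideanSpace ℝ (Fin n) × ℝ => ρ p.1 p.2)
    (K' : Set (EuclideanSpace ℝ (Fin n))) (hK' : IsCompact K')
    (hρsupp : ∀ t ∈ Set.Icc t₀ t₁, ∀ x ∉ K', ρ x t = 0)
    (hvC1 : ContDiff ℝ 1 fun p : EuclideanSpace ℝ (Fin n) × ℝ => v p.1 p.2)
    (hρcont : ∀ x, ∀ t ∈ Set.Ioo t₀ t₁,
      deriv (fun s => ρ x s) t + diver (fun y => ρ y t • v y t) x = 0)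
    (hρ0 : ∀ x, ρ x t₀ = ρ₀ x) (hρ1 : ∀ x, ρ x t₁ = ρ₁ x) :
    (∫ t in t₀..t₁, ∫ x, (1 / 2) * ‖gradient (fun y => ψ y t) x‖ ^ 2 * ρs x t) ≤
      ∫ t in t₀..t₁, ∫ x, (1 / 2) * ‖v x t‖ ^ 2 * ρ x t := by
  -- gradient slices are C¹
  have hg1 : ∀ t : ℝ, ContDiff ℝ 1 fun x => gradient (fun y => ψ y t) x := by
    intro t
    have h1 : ContDiff ℝ 1 (fderiv ℝ (fun x => ψ x t)) :=
      (hψx t).fderiv_right (by norm_num)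
    have h2 : (fun x => gradient (fun y => ψ y t) x)
        = fun x => (InnerProductSpace.toDual ℝ (EuclideanSpace ℝ (Fin n))).symm
            (fderiv ℝ (fun y => ψ y t) x) := rfl
    rw [h2]
    exact (InnerProductSpace.toDual ℝ
      (EuclideanSpace ℝ (Fin n))).symm.toLinearIsometry.contDiff.comp h1
  have hψx1 : ∀ t : ℝ, ContDiff ℝ 1 fun x => ψ x t := fun t => (hψx t).of_le one_le_two
  -- apply the key computation to both pairs
  obtain ⟨hseq, _, _⟩ := key_aux t₀ t₁ h01 ψ hψt hψx hHJ ρs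
    (fun x t => gradient (fun y => ψ y t) x) hρsC1 K hK hρssupp (fun t _ => hg1 t) hρscont
  obtain ⟨heq, hint, hintx⟩ := key_aux t₀ t₁ h01 ψ hψt hψx hHJ ρ v hρC1 K' hK' hρsupp
    (fun t _ => hvC1.comp (contDiff_id.prodMk contDiff_const)) hρcont
  -- interval integrals as integrals over `Ioo`
  rw [intervalIntegral.integral_of_le h01.le, intervalIntegral.integral_of_le h01.le,
    integral_Ioc_eq_integral_Ioo, integral_Ioc_eq_integral_Ioo]
  -- identify the left side
  have hLHS : (∫ t in Ioo t₀ t₁, ∫ x, (1 / 2) * ‖gradient (fun y => ψ y t) x‖ ^ 2 * ρs x t)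
      = ∫ x, (ψ x t₁ * ρs x t₁ - ψ x t₀ * ρs x t₀) := by
    rw [← hseq]
    refine setIntegral_congr_fun measurableSet_Ioo fun t ht => ?_
    congr 1
    funext x
    have h1 := hHJ x t ht
    have h2 : ⟪gradient (fun y => ψ y t) x, gradient (fun y => ψ y t) x⟫
        = ‖gradient (fun y => ψ y t) x‖ ^ 2 := real_inner_self_eq_norm_sq _
    have h3 : deriv (fun s => ψ x s) t
        = -((1/2) * ‖gradient (fun y => ψ y t) x‖ ^ 2) := by linarith
    rw [h2, h3]
    ring
  rw [hLHS]
  have hB : (∫ x, (ψ x t₁ * ρs x t₁ - ψ x t₀ * ρs x t₀))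
      = ∫ x, (ψ x t₁ * ρ x t₁ - ψ x t₀ * ρ x t₀) := by
    congr 1; funext x; rw [hρs0, hρs1, hρ0, hρ1]
  rw [hB, ← heq]
  -- bounds for `v` and `ρ` on the compact set
  obtain ⟨Mv, hMv⟩ := (hK'.prod (isCompact_Icc (a := t₀) (b := t₁))).exists_bound_of_continuousOn
    hvC1.continuous.continuousOn
  obtain ⟨Mρ, hMρ⟩ := (hK'.prod (isCompact_Icc (a := t₀) (b := t₁))).exists_bound_of_continuousOn
    hρC1.continuous.continuousOn
  set C := (1/2) * Mv^2 * Mρ with hC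
  have hvsl : ∀ t : ℝ, Continuous fun x => v x t := fun t =>
    (hvC1.comp (contDiff_id.prodMk contDiff_const)).continuous
  have hρsl : ∀ t : ℝ, Continuous fun x => ρ x t := fun t =>
    (hρC1.comp (contDiff_id.prodMk contDiff_const)).continuous
  have hFcont : ∀ t : ℝ, Continuous fun x => (1/2) * ‖v x t‖^2 * ρ x t := fun t =>
    (continuous_const.mul ((hvsl t).norm.pow 2)).mul (hρsl t)
  have hFsupp : ∀ t ∈ Icc t₀ t₁, ∀ x ∉ K', (1/2) * ‖v x t‖^2 * ρ x t = 0 := by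
    intro t ht x hx; rw [hρsupp t ht x hx, mul_zero]
  have hFint : ∀ t ∈ Icc t₀ t₁, Integrable (fun x => (1/2) * ‖v x t‖^2 * ρ x t) :=
    fun t ht => integrable_of_compact_support _ (hFcont t) K' hK' (hFsupp t ht)
  have hFbd : ∀ t ∈ Icc t₀ t₁, ∀ x,
      ‖(1/2) * ‖v x t‖^2 * ρ x t‖ ≤ K'.indicator (fun _ => C) x := by
    intro t ht x
    by_cases hx : x ∈ K'
    · rw [indicator_of_mem hx, hC]
      have e1 := hMv (x,t) (mk_mem_prod hx ht)
      have e2 := hMρ (x,t) (mk_mem_prod hx ht)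
      rw [Real.norm_eq_abs] at e2
      rw [Real.norm_eq_abs, abs_mul, abs_mul]
      have h4 : |‖v x t‖^2| = ‖v x t‖^2 := abs_of_nonneg (by positivity)
      rw [h4, abs_of_pos (by norm_num : (0:ℝ) < 1/2)]
      have hv2 : ‖v x t‖^2 ≤ Mv^2 := by nlinarith [norm_nonneg (v x t), e1]
      nlinarith [abs_nonneg (ρ x t), norm_nonneg (v x t), e2, hv2]
    · rw [indicator_of_notMem hx, hρsupp t ht x hx]; simp
  have hInd : Integrable (K'.indicator fun _ : EuclideanSpace ℝ (Fin n) => C) :=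
    (integrable_indicator_iff hK'.measurableSet).mpr
      (integrableOn_const hK'.measure_lt_top.ne)
  refine setIntegral_mono_on hint ?_ measurableSet_Ioo ?_
  · -- integrability of the kinetic action integrand in time
    have hcontR : ∀ t ∈ Ioo t₀ t₁,
        ContinuousAt (fun s => ∫ x, (1/2) * ‖v x s‖^2 * ρ x s) t := by
      intro t ht
      refine continuousAt_of_dominated ?_ ?_ hInd ?_
      · exact Eventually.of_forall fun s => (hFcont s).aestronglyMeasurable
      · filter_upwards [Ioo_mem_nhds ht.1 ht.2] with s hs
        exact Eventually.of_forall fun x => hFbd s (Ioo_subset_Icc_self hs) x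
      · refine Eventually.of_forall fun x => ?_
        have hvx : Continuous fun s => v x s :=
          (hvC1.comp (contDiff_const.prodMk contDiff_id)).continuous
        have hρx : Continuous fun s => ρ x s :=
          (hρC1.comp (contDiff_const.prodMk contDiff_id)).continuous
        exact ((continuous_const.mul (hvx.norm.pow 2)).mul hρx).continuousAt
    have hmeasR : AEMeasurable (fun s => ∫ x, (1/2) * ‖v x s‖^2 * ρ x s)
        (volume.restrict (Ioo t₀ t₁)) :=
      ContinuousOn.aemeasurable (fun t ht => (hcontR t ht).continuousWithinAt)
        measurableSet_Ioo
    have hconst : IntegrableOn (fun _ : ℝ => (volume K').toReal * C) (Ioo t₀ t₁) :=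
      integrableOn_const (by rw [Real.volume_Ioo]; exact ENNReal.ofReal_ne_top)
    refine Integrable.mono' hconst hmeasR.aestronglyMeasurable ?_
    filter_upwards [ae_restrict_mem measurableSet_Ioo] with t ht
    calc ‖∫ x, (1/2) * ‖v x t‖^2 * ρ x t‖
        ≤ ∫ x, ‖(1/2) * ‖v x t‖^2 * ρ x t‖ := norm_integral_le_integral_norm _
      _ ≤ ∫ x, K'.indicator (fun _ => C) x :=
          integral_mono (hFint t (Ioo_subset_Icc_self ht)).norm hInd
            (hFbd t (Ioo_subset_Icc_self ht))
      _ = (volume K').toReal * C := by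
          rw [integral_indicator_const _ hK'.measurableSet]; simp [smul_eq_mul, measureReal_def]
  · intro t ht
    refine integral_mono (hintx t ht) (hFint t (Ioo_subset_Icc_self ht)) fun x => ?_
    have h1 := hHJ x t ht
    have hip := real_inner_le_norm (gradient (fun y => ψ y t) x) (v x t)
    have hkey : deriv (fun s => ψ x s) t + ⟪gradient (fun y => ψ y t) x, v x t⟫
        ≤ (1/2) * ‖v x t‖^2 := by
      nlinarith [sq_nonneg (‖gradient (fun y => ψ y t) x‖ - ‖v x t‖)]
    exact mul_le_mul_of_nonneg_right hkey (hρpos x t)
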